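/- Let v_{k,i} ∈ S^{d-1} for k ∈ [K], i ∈ [n_k], with block means h_k = (1/n_k)∑_i v_{k,i}, π̂_k = n_k/n, n = ∑_k n_k. Then (1/n)∑_{k₁,i₁} log((1/n)∑_{k₃,i₃} exp(v_{k₁,i₁}ᵀ v_{k₃,i₃}/τ)) ≥ ∑_{k₁} π̂_{k₁} log(∑_{k₃} π̂_{k₃} exp(h_{k₁}ᵀ h_{k₃}/τ)) for every τ > 0. -/

import Mathlib

open scoped RealInnerProductSpace

section aux

variable {E : Type*} [NormedAddCommGroup E] [InnerProductSpace ℝ E]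

lemma lse_convexOn {ι : Type*} [Fintype ι] [Nonempty ι] (w : ι → ℝ) (hw : ∀ i, 0 < w i)
    (u : ι → E) (τ : ℝ) (hτ : 0 < τ) :
    ConvexOn ℝ Set.univ (fun x : E => Real.log (∑ i, w i * Real.exp (⟪x, u i⟫ / τ))) := by
  have Spos : ∀ z : E, 0 < ∑ i, w i * Real.exp (⟪z, u i⟫ / τ) := fun z =>
    Finset.sum_pos (fun i _ => mul_pos (hw i) (Real.exp_pos _)) Finset.univ_nonempty
  refine ⟨convex_univ, ?_⟩
  intro x _ y _ a b ha hb hab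
  rcases eq_or_lt_of_le ha with ha0 | ha
  · have hb1 : b = 1 := by linarith
    simp [← ha0, hb1]
  rcases eq_or_lt_of_le hb with hb0 | hb
  · have ha1 : a = 1 := by linarith
    simp [← hb0, ha1]
  have ha1 : a < 1 := by linarith
  have hb1 : b < 1 := by linarith
  have hpq : Real.HolderConjugate (1/a) (1/b) := by
    refine Real.holderConjugate_iff.mpr ⟨?_, ?_⟩
    · exact one_lt_one_div ha ha1
    · rw [one_div, one_div, inv_inv, inv_inv]; exact hab
  have key : ∀ i, w i * Real.exp (⟪a • x + b • y, u i⟫ / τ)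
      = (w i * Real.exp (⟪x, u i⟫ / τ)) ^ a * (w i * Real.exp (⟪y, u i⟫ / τ)) ^ b := by
    intro i
    rw [inner_add_left, real_inner_smul_left, real_inner_smul_left,
      Real.mul_rpow (hw i).le (Real.exp_pos _).le, Real.mul_rpow (hw i).le (Real.exp_pos _).le,
      ← Real.exp_mul, ← Real.exp_mul]
    have hwi : w i = w i ^ a * w i ^ b := by
      rw [← Real.rpow_add (hw i), hab, Real.rpow_one]
    calc w i * Real.exp ((a * ⟪x, u i⟫ + b * ⟪y, u i⟫) / τ)
        = (w i ^ a * w i ^ b) * Real.exp (⟪x, u i⟫ / τ * a + ⟪y, u i⟫ / τ * b) := by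
          rw [← hwi]; ring_nf
      _ = w i ^ a * Real.exp (⟪x, u i⟫ / τ * a) * (w i ^ b * Real.exp (⟪y, u i⟫ / τ * b)) := by
          rw [Real.exp_add]; ring
  have holder : ∑ i, w i * Real.exp (⟪a • x + b • y, u i⟫ / τ)
      ≤ (∑ i, w i * Real.exp (⟪x, u i⟫ / τ)) ^ a * (∑ i, w i * Real.exp (⟪y, u i⟫ / τ)) ^ b := by
    calc ∑ i, w i * Real.exp (⟪a • x + b • y, u i⟫ / τ)
        = ∑ i, (w i * Real.exp (⟪x, u i⟫ / τ)) ^ a * (w i * Real.exp (⟪y, u i⟫ / τ)) ^ b := by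
          exact Finset.sum_congr rfl fun i _ => key i
      _ ≤ (∑ i, ((w i * Real.exp (⟪x, u i⟫ / τ)) ^ a) ^ (1/a)) ^ (1/(1/a)) *
          (∑ i, ((w i * Real.exp (⟪y, u i⟫ / τ)) ^ b) ^ (1/b)) ^ (1/(1/b)) := by
          have := Real.inner_le_Lp_mul_Lq_of_nonneg (Finset.univ)
            (f := fun i => (w i * Real.exp (⟪x, u i⟫ / τ)) ^ a)
            (g := fun i => (w i * Real.exp (⟪y, u i⟫ / τ)) ^ b) hpq
            (fun i _ => Real.rpow_nonneg (mul_pos (hw i) (Real.exp_pos _)).le _)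
            (fun i _ => Real.rpow_nonneg (mul_pos (hw i) (Real.exp_pos _)).le _)
          simpa using this
      _ = (∑ i, w i * Real.exp (⟪x, u i⟫ / τ)) ^ a * (∑ i, w i * Real.exp (⟪y, u i⟫ / τ)) ^ b := by
          have e1 : ∀ t : ℝ, 0 ≤ t → (t ^ a) ^ (1/a) = t := fun t ht => by
            rw [← Real.rpow_mul ht, mul_one_div, div_self ha.ne', Real.rpow_one]
          have e2 : ∀ t : ℝ, 0 ≤ t → (t ^ b) ^ (1/b) = t := fun t ht => by
            rw [← Real.rpow_mul ht, mul_one_div, div_self hb.ne', Real.rpow_one]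
          have hsx : (∑ i, ((w i * Real.exp (⟪x, u i⟫ / τ)) ^ a) ^ (1/a))
              = ∑ i, w i * Real.exp (⟪x, u i⟫ / τ) :=
            Finset.sum_congr rfl fun i _ => e1 _ (mul_pos (hw i) (Real.exp_pos _)).le
          have hsy : (∑ i, ((w i * Real.exp (⟪y, u i⟫ / τ)) ^ b) ^ (1/b))
              = ∑ i, w i * Real.exp (⟪y, u i⟫ / τ) :=
            Finset.sum_congr rfl fun i _ => e2 _ (mul_pos (hw i) (Real.exp_pos _)).le
          rw [hsx, hsy, one_div_one_div, one_div_one_div]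
  calc Real.log (∑ i, w i * Real.exp (⟪a • x + b • y, u i⟫ / τ))
      ≤ Real.log ((∑ i, w i * Real.exp (⟪x, u i⟫ / τ)) ^ a *
          (∑ i, w i * Real.exp (⟪y, u i⟫ / τ)) ^ b) := Real.log_le_log (Spos _) holder
    _ = a * Real.log (∑ i, w i * Real.exp (⟪x, u i⟫ / τ)) +
        b * Real.log (∑ i, w i * Real.exp (⟪y, u i⟫ / τ)) := by
        rw [Real.log_mul (Real.rpow_pos_of_pos (Spos x) a).ne' (Real.rpow_pos_of_pos (Spos y) b).ne',
          Real.log_rpow (Spos x), Real.log_rpow (Spos y)]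

end aux

theorem stmt_3 {d K : ℕ} (n : Fin K → ℕ) (hn : ∀ k, 0 < n k)
    (v : (k : Fin K) → Fin (n k) → EuclideanSpace ℝ (Fin d))
    (hv : ∀ k i, ‖v k i‖ = 1)
    (h : Fin K → EuclideanSpace ℝ (Fin d))
    (hmean : ∀ k, h k = (1 / (n k : ℝ)) • ∑ i, v k i)
    (N : ℕ) (hN : N = ∑ k, n k)
    (pihat : Fin K → ℝ) (hpi : ∀ k, pihat k = (n k : ℝ) / N)
    (τ : ℝ) (hτ : 0 < τ) :
    (1 / (N : ℝ)) * ∑ k₁, ∑ i₁, Real.log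
        ((1 / (N : ℝ)) * ∑ k₃, ∑ i₃, Real.exp (⟪v k₁ i₁, v k₃ i₃⟫ / τ))
      ≥ ∑ k₁, pihat k₁ * Real.log (∑ k₃, pihat k₃ * Real.exp (⟪h k₁, h k₃⟫ / τ)) := by
  rcases Nat.eq_zero_or_pos K with hK | hK
  · subst hK; simp
  have : Nonempty (Fin K) := ⟨⟨0, hK⟩⟩
  have hNpos : 0 < (N : ℝ) := by
    have : 0 < N := by
      rw [hN]; exact Finset.sum_pos (fun k _ => hn k) Finset.univ_nonempty
    exact_mod_cast this
  have hpipos : ∀ k, 0 < pihat k := fun k => by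
    rw [hpi]; exact div_pos (by exact_mod_cast hn k) hNpos
  set g : EuclideanSpace ℝ (Fin d) → ℝ :=
    fun x => Real.log (∑ k₃, pihat k₃ * Real.exp (⟪x, h k₃⟫ / τ)) with hg
  have gpos : ∀ x, 0 < ∑ k₃, pihat k₃ * Real.exp (⟪x, h k₃⟫ / τ) := fun x =>
    Finset.sum_pos (fun k _ => mul_pos (hpipos k) (Real.exp_pos _)) Finset.univ_nonempty
  have hgconv : ConvexOn ℝ Set.univ g := lse_convexOn pihat hpipos h τ hτ
  -- inner mean identity
  have hinner : ∀ (x : EuclideanSpace ℝ (Fin d)) (k : Fin K),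
      ⟪x, h k⟫ / τ = ∑ i, (1 / (n k : ℝ)) • (⟪x, v k i⟫ / τ) := by
    intro x k
    rw [hmean k, real_inner_smul_right, inner_sum, Finset.mul_sum, Finset.sum_div]
    refine Finset.sum_congr rfl fun i _ => ?_
    rw [smul_eq_mul]; ring
  -- Step A: pointwise lower bound of the inner log argument
  have stepA : ∀ x : EuclideanSpace ℝ (Fin d),
      g x ≤ Real.log ((1 / (N : ℝ)) * ∑ k₃, ∑ i₃, Real.exp (⟪x, v k₃ i₃⟫ / τ)) := by
    intro x
    refine Real.log_le_log (gpos x) ?_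
    rw [Finset.mul_sum]
    refine Finset.sum_le_sum fun k _ => ?_
    have hjensen : Real.exp (⟪x, h k⟫ / τ) ≤ ∑ i, (1 / (n k : ℝ)) * Real.exp (⟪x, v k i⟫ / τ) := by
      have := convexOn_exp.map_sum_le (t := Finset.univ) (w := fun _ : Fin (n k) => 1 / (n k : ℝ))
        (p := fun i => ⟪x, v k i⟫ / τ) (fun i _ => by positivity)
        (by
          rw [Finset.sum_const, Finset.card_univ, Fintype.card_fin, nsmul_eq_mul, mul_one_div,
            div_self (by exact_mod_cast (hn k).ne' : ((n k : ℝ)) ≠ 0)]) (fun i _ => Set.mem_univ _)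
      rw [← hinner] at this
      exact this
    calc pihat k * Real.exp (⟪x, h k⟫ / τ)
        ≤ pihat k * ∑ i, (1 / (n k : ℝ)) * Real.exp (⟪x, v k i⟫ / τ) :=
          mul_le_mul_of_nonneg_left hjensen (hpipos k).le
      _ = (1 / (N : ℝ)) * ∑ i, Real.exp (⟪x, v k i⟫ / τ) := by
          rw [hpi, Finset.mul_sum, Finset.mul_sum]
          refine Finset.sum_congr rfl fun i _ => ?_
          have hnk : (n k : ℝ) ≠ 0 := by exact_mod_cast (hn k).ne'
          have hNne : (N : ℝ) ≠ 0 := hNpos.ne'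
          field_simp
  -- Step B: Jensen for g
  have stepB : ∀ k : Fin K, ((n k : ℝ)) * g (h k) ≤ ∑ i, g (v k i) := by
    intro k
    have hmean' : h k = ∑ i, (1 / (n k : ℝ)) • v k i := by
      rw [hmean k, Finset.smul_sum]
    have := hgconv.map_sum_le (t := Finset.univ) (w := fun _ : Fin (n k) => 1 / (n k : ℝ))
      (p := fun i => v k i) (fun i _ => by positivity)
      (by
        rw [Finset.sum_const, Finset.card_univ, Fintype.card_fin, nsmul_eq_mul, mul_one_div,
          div_self (by exact_mod_cast (hn k).ne' : ((n k : ℝ)) ≠ 0)]) (fun i _ => Set.mem_univ _)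
    rw [← hmean'] at this
    have hn' : (0:ℝ) < (n k : ℝ) := by exact_mod_cast hn k
    calc ((n k : ℝ)) * g (h k) ≤ (n k : ℝ) * ∑ i, (1 / (n k : ℝ)) * g (v k i) :=
          mul_le_mul_of_nonneg_left this hn'.le
      _ = ∑ i, g (v k i) := by
          rw [← Finset.mul_sum, ← mul_assoc, mul_one_div, div_self hn'.ne', one_mul]
  -- combine
  have main : (1 / (N : ℝ)) * ∑ k₁, ∑ i₁, Real.log
        ((1 / (N : ℝ)) * ∑ k₃, ∑ i₃, Real.exp (⟪v k₁ i₁, v k₃ i₃⟫ / τ))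
      ≥ ∑ k₁, pihat k₁ * g (h k₁) := by
    calc ∑ k₁, pihat k₁ * g (h k₁)
        = (1 / (N : ℝ)) * ∑ k₁, (n k₁ : ℝ) * g (h k₁) := by
          rw [Finset.mul_sum]
          refine Finset.sum_congr rfl fun k _ => ?_
          rw [hpi]; ring
      _ ≤ (1 / (N : ℝ)) * ∑ k₁, ∑ i₁, g (v k₁ i₁) := by
          refine mul_le_mul_of_nonneg_left (Finset.sum_le_sum fun k _ => stepB k) (by positivity)
      _ ≤ (1 / (N : ℝ)) * ∑ k₁, ∑ i₁, Real.log
            ((1 / (N : ℝ)) * ∑ k₃, ∑ i₃, Real.exp (⟪v k₁ i₁, v k₃ i₃⟫ / τ)) := by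
          refine mul_le_mul_of_nonneg_left
            (Finset.sum_le_sum fun k _ => Finset.sum_le_sum fun i _ => stepA (v k i)) (by positivity)
  exact main
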